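/- For any finite graph G and any set A of edges of G, bn(G - A) ≤ (|A| + 1) · bn(G), where G - A denotes the graph obtained from G by deleting the edges in A. -/

import Mathlib

variable {V : Type*} [Fintype V] [DecidableEq V]

/-- An F2-cycle relative to an edge set `E`: a finite set of edges, all belonging to `E`,
in which every vertex has even degree. -/
def IsF2CycleIn (E : Set (Sym2 V)) (C : Finset (Sym2 V)) : Prop :=
  (∀ e ∈ C, e ∈ E) ∧ ∀ v : V, Even ((C.filter (fun e => v ∈ e)).card)

/-- `B` generates the cycle space of the graph with edge set `E`: every F2-cycle is a
symmetric difference of a subfamily of `B`. -/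
def GeneratesIn (E : Set (Sym2 V)) (B : List (Finset (Sym2 V))) : Prop :=
  ∀ C : Finset (Sym2 V), IsF2CycleIn E C →
    ∃ l : List (Finset (Sym2 V)), l.Sublist B ∧ C = l.foldr symmDiff ∅

/-- The basis number of the graph with edge set `E`: the least `k` such that some
family of F2-cycles generating the cycle space uses each edge at most `k` times. -/
noncomputable def bnSet (E : Set (Sym2 V)) : ℕ :=
  sInf {k | ∃ B : List (Finset (Sym2 V)), (∀ X ∈ B, IsF2CycleIn E X) ∧
    GeneratesIn E B ∧ ∀ e : Sym2 V, B.countP (fun X => decide (e ∈ X)) ≤ k}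

/-- The basis number of a graph. -/
noncomputable def SimpleGraph.bn (G : SimpleGraph V) : ℕ := bnSet G.edgeSet

section AuxHelpers

section Helpers

variable {M : Type*} [AddCommMonoid M]

lemma sum_symmDiff_eq (h2 : ∀ x : M, x + x = 0) (f : ℕ → M) (S T : Finset ℕ) :
    (symmDiff S T).sum f = S.sum f + T.sum f := by
  have hd : symmDiff S T = (S ∪ T) \ (S ∩ T) := by
    rw [symmDiff_eq_sup_sdiff_inf]; rfl
  have hsub : S ∩ T ⊆ S ∪ T := (Finset.inter_subset_left).trans Finset.subset_union_left
  have h1 : (symmDiff S T).sum f + (S ∩ T).sum f = (S ∪ T).sum f := by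
    rw [hd]; exact Finset.sum_sdiff hsub
  have h3 : (S ∪ T).sum f + (S ∩ T).sum f = S.sum f + T.sum f := Finset.sum_union_inter
  calc (symmDiff S T).sum f = (symmDiff S T).sum f + ((S ∩ T).sum f + (S ∩ T).sum f) := by
        rw [h2]; rw [add_zero]
    _ = ((symmDiff S T).sum f + (S ∩ T).sum f) + (S ∩ T).sum f := (add_assoc _ _ _).symm
    _ = S.sum f + T.sum f := by rw [h1, h3]

lemma symmDiff_subset_union (S T : Finset ℕ) : symmDiff S T ⊆ S ∪ T := by
  intro x hx
  rw [Finset.mem_symmDiff] at hx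
  rcases hx with ⟨h, _⟩ | ⟨h, _⟩ <;> simp [h]

lemma sum_foldr_symmDiff (h2 : ∀ x : M, x + x = 0) (f : ℕ → M) (l : List (Finset ℕ)) :
    (l.foldr symmDiff ∅).sum f = (l.map (fun T => T.sum f)).sum := by
  induction l with
  | nil => simp
  | cons T l ih =>
      simp only [List.foldr_cons, List.map_cons, List.sum_cons]
      rw [sum_symmDiff_eq h2, ih]

lemma indep_card_le {α : Type*} [Fintype α] [DecidableEq α] (q : ℕ → α → ZMod 2) (Bas : Finset ℕ)
    (h : ∀ S ⊆ Bas, S.sum q = 0 → S = ∅) : Bas.card ≤ Fintype.card α := by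
  have h2 : ∀ x : α → ZMod 2, x + x = 0 := by
    intro x; funext a; exact (by decide : ∀ y : ZMod 2, y + y = 0) (x a)
  have hinj : Set.InjOn (fun S : Finset ℕ => S.sum q) (Bas.powerset : Finset (Finset ℕ)) := by
    intro S hS T hT hST
    simp only [Finset.coe_powerset, Set.mem_preimage, Set.mem_powerset_iff, Finset.coe_subset]
      at hS hT
    have hsub : symmDiff S T ⊆ Bas := (symmDiff_subset_union S T).trans (Finset.union_subset hS hT)
    have : (symmDiff S T).sum q = 0 := by
      rw [sum_symmDiff_eq h2]
      simp only at hST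
      rw [hST, h2]
    have := h _ hsub this
    have := symmDiff_eq_bot.mp this
    exact this
  have hcard := Finset.card_le_card_of_injOn (fun S : Finset ℕ => S.sum q)
    (fun a _ => Finset.mem_univ _) hinj
  rw [Finset.card_powerset, Finset.card_univ, Fintype.card_fun] at hcard
  have : Fintype.card (ZMod 2) = 2 := by decide
  rw [this] at hcard
  exact (Nat.pow_le_pow_iff_right (by norm_num)).mp hcard

lemma char2_eq_of_add_eq_zero (h2 : ∀ x : M, x + x = 0) {a b : M} (h : a + b = 0) : a = b := by
  calc a = a + (b + b) := by rw [h2, add_zero]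
    _ = (a + b) + b := (add_assoc _ _ _).symm
    _ = b := by rw [h, zero_add]


end Helpers

section Core

variable {α : Type*} [Fintype α] [DecidableEq α]


lemma core (q : ℕ → α → ZMod 2) :
    ∀ m : ℕ, ∃ (out : List (Finset ℕ)) (Bas : Finset ℕ),
      (∀ T ∈ out, T ⊆ Finset.range m ∧ T.sum q = 0) ∧
      (∀ S : Finset ℕ, S ⊆ Finset.range m → S.sum q = 0 →
        ∃ l : List (Finset ℕ), l.Sublist out ∧ S = l.foldr symmDiff ∅) ∧
      Bas ⊆ Finset.range m ∧
      (∀ S ⊆ Bas, S.sum q = 0 → S = ∅) ∧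
      (∀ i < m, ∃ S, S ⊆ Bas ∧ q i = S.sum q) ∧
      (∀ x : ℕ, 1 ≤ x →
        (Bas.filter (fun j => x ≤ out.countP (fun T => decide (j ∈ T)))).card
          ≤ Fintype.card α + 1 - x) ∧
      (∀ j ∉ Bas, out.countP (fun T => decide (j ∈ T)) ≤ Fintype.card α + 1) := by
  have h2 : ∀ x : α → ZMod 2, x + x = 0 := by
    intro x; funext a; exact (by decide : ∀ y : ZMod 2, y + y = 0) (x a)
  intro m
  induction m with
  | zero =>
      refine ⟨[], ∅, by simp, ?_, by simp, by simp, by simp, by simp, by simp⟩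
      intro S hS _
      have hSe : S = ∅ := by
        rw [Finset.range_zero, Finset.subset_empty] at hS; exact hS
      exact ⟨[], List.Sublist.refl _, by simp [hSe]⟩
  | succ m IH =>
      obtain ⟨out, Bas, hout, hgen, hBasR, hind, hspan, hcnt, hfree⟩ := IH
      set w : ℕ → ℕ := fun j => out.countP (fun T => decide (j ∈ T)) with hw
      have hwdef : ∀ j, out.countP (fun T => decide (j ∈ T)) = w j := fun _ => rfl
      simp only [hwdef] at hcnt hfree
      have hrangesub : Finset.range m ⊆ Finset.range (m + 1) := by
        intro j hj; rw [Finset.mem_range] at *; omega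
      have hwm : w m = 0 := by
        rw [hw]
        simp only
        rw [List.countP_eq_zero]
        intro T hT
        simp only [decide_eq_true_eq]
        intro hmem
        have := (hout T hT).1 hmem
        rw [Finset.mem_range] at this; omega
      have hmBas : m ∉ Bas := fun h => by
        have := hBasR h; rw [Finset.mem_range] at this; omega
      have hcl : ∀ S : Finset ℕ, S ⊆ Finset.range m →
          ∃ S', S' ⊆ Bas ∧ S.sum q = S'.sum q := by
        intro S
        induction S using Finset.induction_on with
        | empty => intro _; exact ⟨∅, Finset.empty_subset _, by simp⟩
        | @insert i S hiS ih =>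
            intro hsub
            obtain ⟨S1, hS1, he1⟩ := ih (fun j hj => hsub (Finset.mem_insert_of_mem hj))
            obtain ⟨S2, hS2, he2⟩ :=
              hspan i (Finset.mem_range.mp (hsub (Finset.mem_insert_self i S)))
            refine ⟨symmDiff S2 S1,
              (symmDiff_subset_union _ _).trans (Finset.union_subset hS2 hS1), ?_⟩
            rw [Finset.sum_insert hiS, sum_symmDiff_eq h2, ← he1, ← he2]
      by_cases hm : ∃ S, S ⊆ Bas ∧ q m = S.sum q
      · -- q m is in the span: produce a new generator
        obtain ⟨Sm, hSmBas, hqm⟩ := hm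
        have hmSm : m ∉ Sm := fun h => hmBas (hSmBas h)
        set Tm : Finset ℕ := insert m Sm with hTm
        have hmTm : m ∈ Tm := Finset.mem_insert_self _ _
        have hsumTm : Tm.sum q = 0 := by
          rw [hTm, Finset.sum_insert hmSm, ← hqm, h2]
        have hToutR : ∀ T ∈ (Tm :: out), T ⊆ Finset.range (m + 1) ∧ T.sum q = 0 := by
          intro T hT
          rcases List.mem_cons.mp hT with rfl | hT
          · refine ⟨?_, hsumTm⟩
            intro j hj
            rcases Finset.mem_insert.mp hj with rfl | hj
            · exact Finset.self_mem_range_succ j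
            · exact hrangesub (hBasR (hSmBas hj))
          · exact ⟨(hout T hT).1.trans hrangesub, (hout T hT).2⟩
        have hgen' : ∀ S : Finset ℕ, S ⊆ Finset.range (m + 1) → S.sum q = 0 →
            ∃ l : List (Finset ℕ), l.Sublist (Tm :: out) ∧ S = l.foldr symmDiff ∅ := by
          intro S hS hsum
          by_cases hmS : m ∈ S
          · set S' : Finset ℕ := symmDiff S Tm with hS'
            have hmS' : m ∉ S' := by
              rw [hS', Finset.mem_symmDiff]
              rintro (⟨_, h⟩ | ⟨_, h⟩) <;> [exact h hmTm; exact h hmS]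
            have hS'R : S' ⊆ Finset.range m := by
              intro j hj
              have hj1 : j ∈ S ∪ Tm := symmDiff_subset_union _ _ hj
              have hj2 : j ∈ Finset.range (m + 1) := by
                rcases Finset.mem_union.mp hj1 with h | h
                · exact hS h
                · exact (hToutR Tm List.mem_cons_self).1 h
              rw [Finset.mem_range] at *
              have : j ≠ m := fun hjm => hmS' (hjm ▸ hj)
              omega
            have hS'sum : S'.sum q = 0 := by
              rw [hS', sum_symmDiff_eq h2, hsum, hsumTm, add_zero]
            obtain ⟨l', hl', hfold⟩ := hgen S' hS'R hS'sum
            refine ⟨Tm :: l', List.Sublist.cons₂ _ hl', ?_⟩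
            rw [List.foldr_cons, ← hfold, hS', symmDiff_comm S Tm,
              symmDiff_symmDiff_cancel_left]
          · have hSR : S ⊆ Finset.range m := by
              intro j hj
              have := hS hj
              rw [Finset.mem_range] at *
              have : j ≠ m := fun hjm => hmS (hjm ▸ hj)
              omega
            obtain ⟨l', hl', hfold⟩ := hgen S hSR hsum
            exact ⟨l', hl'.cons _, hfold⟩
        have hwcons : ∀ j, (Tm :: out).countP (fun T => decide (j ∈ T)) =
            w j + (if j ∈ Tm then 1 else 0) := by
          intro j
          rw [List.countP_cons, hw]
          simp
        by_cases hSm0 : Sm = ∅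
        · -- q m = 0 : no basis change
          refine ⟨Tm :: out, Bas, hToutR, hgen', hBasR.trans hrangesub, hind, ?_, ?_, ?_⟩
          · intro i hi
            rcases Nat.lt_succ_iff_lt_or_eq.mp hi with hi | rfl
            · exact hspan i hi
            · exact ⟨∅, Finset.empty_subset _, by simp [hqm, hSm0]⟩
          · intro x hx
            have hfeq : (Bas.filter (fun j => x ≤ (Tm :: out).countP (fun T => decide (j ∈ T))))
                = Bas.filter (fun j => x ≤ w j) := by
              apply Finset.filter_congr
              intro j hj
              have hjTm : j ∉ Tm := by
                rw [hTm, hSm0]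
                simp only [LawfulSingleton.insert_empty_eq, Finset.mem_singleton]
                exact fun hh => hmBas (hh ▸ hj)
              rw [hwcons, if_neg hjTm, add_zero]
            rw [hfeq]
            exact hcnt x hx
          · intro j hj
            rw [hwcons]
            by_cases hjTm : j ∈ Tm
            · have hjm : j = m := by
                rw [hTm, hSm0] at hjTm
                simpa using hjTm
              rw [if_pos hjTm, hjm, hwm]
              omega
            · rw [if_neg hjTm, add_zero]
              exact hfree j hj
        · -- nonempty Sm : exchange step
          obtain ⟨js, hjsSm, hjsmax⟩ := Finset.exists_max_image Sm w (Finset.nonempty_iff_ne_empty.mpr hSm0)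
          have hjsBas : js ∈ Bas := hSmBas hjsSm
          have hjsm : js ≠ m := fun h => hmBas (h ▸ hjsBas)
          set Bas' : Finset ℕ := insert m (Bas.erase js) with hBas'
          have hmBas' : m ∈ Bas' := Finset.mem_insert_self _ _
          have hjsBas' : js ∉ Bas' := by
            rw [hBas', Finset.mem_insert]
            rintro (h | h)
            · exact hjsm h
            · exact (Finset.mem_erase.mp h).1 rfl
          have hBas'R : Bas' ⊆ Finset.range (m + 1) := by
            intro j hj
            rcases Finset.mem_insert.mp hj with rfl | hj
            · exact Finset.self_mem_range_succ j
            · exact hrangesub (hBasR (Finset.mem_erase.mp hj).2)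
          have hcard' : Bas.card ≤ Fintype.card α := indep_card_le q Bas hind
          -- q js in terms of Bas'
          have hqjs : q js = (insert m (Sm.erase js)).sum q := by
            have hmer : m ∉ Sm.erase js := fun h => hmSm (Finset.mem_of_mem_erase h)
            rw [Finset.sum_insert hmer]
            have he : (Sm.erase js).sum q + q js = Sm.sum q := Finset.sum_erase_add _ _ hjsSm
            have : q m + (Sm.erase js).sum q + ((Sm.erase js).sum q + q js)
                = q m + (Sm.erase js).sum q + Sm.sum q := by rw [he]
            rw [← hqm] at this
            calc q js = ((Sm.erase js).sum q + (Sm.erase js).sum q) + q js := by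
                  rw [h2, zero_add]
              _ = (Sm.erase js).sum q + ((Sm.erase js).sum q + q js) := add_assoc _ _ _
              _ = (Sm.erase js).sum q + Sm.sum q := by rw [he]
              _ = (Sm.erase js).sum q + q m := by rw [hqm]
              _ = q m + (Sm.erase js).sum q := add_comm _ _
          have hqjsSub : insert m (Sm.erase js) ⊆ Bas' := by
            intro j hj
            rcases Finset.mem_insert.mp hj with rfl | hj
            · exact hmBas'
            · exact Finset.mem_insert_of_mem (Finset.erase_subset_erase js hSmBas hj)
          have hind' : ∀ S ⊆ Bas', S.sum q = 0 → S = ∅ := by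
            intro S hS hsum
            by_cases hmS : m ∈ S
            · exfalso
              have hq1 : q m = (S.erase m).sum q := by
                have he : (S.erase m).sum q + q m = S.sum q := Finset.sum_erase_add _ _ hmS
                rw [hsum] at he
                exact (char2_eq_of_add_eq_zero h2 he).symm
              have hsub1 : S.erase m ⊆ Bas.erase js := by
                intro j hj
                have hj1 := Finset.mem_erase.mp hj
                rcases Finset.mem_insert.mp (hS hj1.2) with h | h
                · exact absurd h hj1.1
                · exact h
              have hz : (symmDiff (S.erase m) Sm).sum q = 0 := by
                rw [sum_symmDiff_eq h2, ← hq1, ← hqm, h2]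
              have hsub2 : symmDiff (S.erase m) Sm ⊆ Bas :=
                (symmDiff_subset_union _ _).trans
                  (Finset.union_subset (hsub1.trans (Finset.erase_subset _ _)) hSmBas)
              have heq : S.erase m = Sm := by
                have := hind _ hsub2 hz
                have := symmDiff_eq_bot.mp this
                exact this
              have : js ∈ S.erase m := heq ▸ hjsSm
              exact (Finset.mem_erase.mp (hsub1 this)).1 rfl
            · apply hind S _ hsum
              intro j hj
              rcases Finset.mem_insert.mp (hS hj) with rfl | h
              · exact absurd hj hmS
              · exact (Finset.mem_erase.mp h).2
          have hspan' : ∀ i < m + 1, ∃ S, S ⊆ Bas' ∧ q i = S.sum q := by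
            intro i hi
            rcases Nat.lt_succ_iff_lt_or_eq.mp hi with hi | rfl
            · obtain ⟨S, hS, he⟩ := hspan i hi
              by_cases hjsS : js ∈ S
              · refine ⟨symmDiff (S.erase js) (insert m (Sm.erase js)), ?_, ?_⟩
                · refine (symmDiff_subset_union _ _).trans (Finset.union_subset ?_ hqjsSub)
                  intro j hj
                  exact Finset.mem_insert_of_mem (Finset.erase_subset_erase js hS hj)
                · rw [sum_symmDiff_eq h2, ← hqjs]
                  have he2 : (S.erase js).sum q + q js = S.sum q := Finset.sum_erase_add _ _ hjsS
                  rw [he, ← he2]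
              · refine ⟨S, ?_, he⟩
                intro j hj
                exact Finset.mem_insert_of_mem (Finset.mem_erase.mpr ⟨fun h => hjsS (h ▸ hj), hS hj⟩)
            · exact ⟨({i} : Finset ℕ), Finset.singleton_subset_iff.mpr hmBas',
                by rw [Finset.sum_singleton]⟩
          -- load bound for js
          have hwjs : w js ≤ Fintype.card α := by
            by_cases h0 : 1 ≤ w js
            · have hmem : js ∈ Bas.filter (fun j => w js ≤ w j) :=
                Finset.mem_filter.mpr ⟨hjsBas, le_refl _⟩
              have hcard1 : 1 ≤ (Bas.filter (fun j => w js ≤ w j)).card :=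
                Finset.card_pos.mpr ⟨js, hmem⟩
              have := hcnt (w js) h0
              omega
            · omega
          refine ⟨Tm :: out, Bas', hToutR, hgen', hBas'R, hind', hspan', ?_, ?_⟩
          · -- load counting invariant
            intro x hx
            by_cases hx2 : 2 ≤ x
            · have hsub : (Bas'.filter (fun j => x ≤ (Tm :: out).countP (fun T => decide (j ∈ T))))
                  ⊆ (Bas.filter (fun j => x - 1 ≤ w j)).erase js := by
                intro j hj
                obtain ⟨hj1, hj2⟩ := Finset.mem_filter.mp hj
                rw [hwcons] at hj2
                rcases Finset.mem_insert.mp hj1 with rfl | hj1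
                · exfalso
                  rw [hwm] at hj2
                  by_cases hjTm : j ∈ Tm <;> simp [hjTm] at hj2 <;> omega
                · obtain ⟨hjne, hjBas⟩ := Finset.mem_erase.mp hj1
                  refine Finset.mem_erase.mpr ⟨hjne, Finset.mem_filter.mpr ⟨hjBas, ?_⟩⟩
                  by_cases hjTm : j ∈ Tm
                  · rw [if_pos hjTm] at hj2; omega
                  · rw [if_neg hjTm, add_zero] at hj2; omega
              by_cases hj0 : ∃ j0 ∈ Sm, x - 1 ≤ w j0
              · obtain ⟨j0, hj0Sm, hj0w⟩ := hj0
                have hjsmem : js ∈ Bas.filter (fun j => x - 1 ≤ w j) :=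
                  Finset.mem_filter.mpr ⟨hjsBas, le_trans hj0w (hjsmax j0 hj0Sm)⟩
                have hc1 := Finset.card_le_card hsub
                rw [Finset.card_erase_of_mem hjsmem] at hc1
                have hc2 := hcnt (x - 1) (by omega)
                have hc3 : 1 ≤ (Bas.filter (fun j => x - 1 ≤ w j)).card :=
                  Finset.card_pos.mpr ⟨js, hjsmem⟩
                omega
              · push_neg at hj0
                have hsub2 : (Bas'.filter (fun j => x ≤ (Tm :: out).countP (fun T => decide (j ∈ T))))
                    ⊆ Bas.filter (fun j => x ≤ w j) := by
                  intro j hj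
                  obtain ⟨hj1, hj2⟩ := Finset.mem_filter.mp hj
                  rw [hwcons] at hj2
                  rcases Finset.mem_insert.mp hj1 with rfl | hj1
                  · exfalso
                    rw [hwm] at hj2
                    by_cases hjTm : j ∈ Tm <;> simp [hjTm] at hj2 <;> omega
                  · obtain ⟨hjne, hjBas⟩ := Finset.mem_erase.mp hj1
                    refine Finset.mem_filter.mpr ⟨hjBas, ?_⟩
                    by_cases hjTm : j ∈ Tm
                    · rcases Finset.mem_insert.mp hjTm with rfl | hjSm
                      · exact absurd hjBas hmBas
                      · have := hj0 j hjSm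
                        rw [if_pos hjTm] at hj2
                        omega
                    · rw [if_neg hjTm, add_zero] at hj2; omega
                have hc1 := Finset.card_le_card hsub2
                have hc2 := hcnt x hx
                omega
            · -- x = 1
              have hx1 : x = 1 := by omega
              subst hx1
              have hsub : (Bas'.filter (fun j => 1 ≤ (Tm :: out).countP (fun T => decide (j ∈ T))))
                  ⊆ Bas' := Finset.filter_subset _ _
              have hc1 := Finset.card_le_card hsub
              have hc2 : Bas'.card ≤ Bas.card := by
                have hmm : m ∉ Bas.erase js := fun h => hmBas (Finset.mem_erase.mp h).2
                rw [hBas', Finset.card_insert_of_notMem hmm,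
                  Finset.card_erase_of_mem hjsBas]
                have : 1 ≤ Bas.card := Finset.card_pos.mpr ⟨js, hjsBas⟩
                omega
              have hc3 := hcard'
              omega
          · -- free columns bound
            intro j hj
            rw [hwcons]
            by_cases hjTm : j ∈ Tm
            · rw [if_pos hjTm]
              rcases Finset.mem_insert.mp hjTm with rfl | hjSm
              · exact absurd hmBas' hj
              · have hjeq : j = js := by
                  by_contra hne
                  exact hj (Finset.mem_insert_of_mem
                    (Finset.mem_erase.mpr ⟨hne, hSmBas hjSm⟩))
                rw [hjeq]
                omega
            · rw [if_neg hjTm, add_zero]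
              by_cases hjBas : j ∈ Bas
              · have hjeq : j = js := by
                  by_contra hne
                  exact hj (Finset.mem_insert_of_mem (Finset.mem_erase.mpr ⟨hne, hjBas⟩))
                rw [hjeq]
                omega
              · exact hfree j hjBas
      · -- q m independent : extend the basis
        refine ⟨out, insert m Bas, ?_, ?_, ?_, ?_, ?_, ?_, ?_⟩
        · intro T hT
          exact ⟨(hout T hT).1.trans hrangesub, (hout T hT).2⟩
        · intro S hS hsum
          have hmS : m ∉ S := by
            intro hmS
            apply hm
            have hq1 : q m = (S.erase m).sum q := by
              have he : (S.erase m).sum q + q m = S.sum q := Finset.sum_erase_add _ _ hmS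
              rw [hsum] at he
              exact (char2_eq_of_add_eq_zero h2 he).symm
            have hsub : S.erase m ⊆ Finset.range m := by
              intro j hj
              obtain ⟨hjne, hjS⟩ := Finset.mem_erase.mp hj
              have := hS hjS
              rw [Finset.mem_range] at *
              omega
            obtain ⟨S', hS', he'⟩ := hcl (S.erase m) hsub
            exact ⟨S', hS', hq1.trans he'⟩
          apply hgen S _ hsum
          intro j hj
          have := hS hj
          rw [Finset.mem_range] at *
          have : j ≠ m := fun hjm => hmS (hjm ▸ hj)
          omega
        · intro j hj
          rcases Finset.mem_insert.mp hj with rfl | hj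
          · exact Finset.self_mem_range_succ j
          · exact hrangesub (hBasR hj)
        · intro S hS hsum
          by_cases hmS : m ∈ S
          · exfalso
            apply hm
            have hq1 : q m = (S.erase m).sum q := by
              have he : (S.erase m).sum q + q m = S.sum q := Finset.sum_erase_add _ _ hmS
              rw [hsum] at he
              exact (char2_eq_of_add_eq_zero h2 he).symm
            refine ⟨S.erase m, ?_, hq1⟩
            intro j hj
            obtain ⟨hjne, hjS⟩ := Finset.mem_erase.mp hj
            rcases Finset.mem_insert.mp (hS hjS) with h | h
            · exact absurd h hjne
            · exact h
          · apply hind S _ hsum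
            intro j hj
            rcases Finset.mem_insert.mp (hS hj) with rfl | h
            · exact absurd hj hmS
            · exact h
        · intro i hi
          rcases Nat.lt_succ_iff_lt_or_eq.mp hi with hi | rfl
          · obtain ⟨S, hS, he⟩ := hspan i hi
            exact ⟨S, hS.trans (Finset.subset_insert _ _), he⟩
          · exact ⟨({i} : Finset ℕ),
              Finset.singleton_subset_iff.mpr (Finset.mem_insert_self _ _),
              by rw [Finset.sum_singleton]⟩
        · intro x hx
          have hfeq : ((insert m Bas).filter (fun j => x ≤ out.countP (fun T => decide (j ∈ T))))
              = Bas.filter (fun j => x ≤ out.countP (fun T => decide (j ∈ T))) := by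
            rw [Finset.filter_insert, if_neg]
            simp only [hwdef]
            rw [hwm]
            omega
          rw [hfeq]
          simp only [hwdef]
          exact hcnt x hx
        · intro j hj
          have : j ∉ Bas := fun h => hj (Finset.mem_insert_of_mem h)
          exact hfree j this

end Core


section Ind

variable {γ : Type*} [DecidableEq γ]

def Ind (X : Finset γ) : γ → ZMod 2 := fun e => if e ∈ X then 1 else 0

lemma Ind_symmDiff (X Y : Finset γ) : Ind (symmDiff X Y) = Ind X + Ind Y := by
  funext e
  simp only [Ind, Pi.add_apply]
  by_cases hX : e ∈ X <;> by_cases hY : e ∈ Y <;>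
    simp [Finset.mem_symmDiff, hX, hY] <;> decide

lemma Ind_inj {X Y : Finset γ} (h : Ind X = Ind Y) : X = Y := by
  ext e
  have he := congrFun h e
  simp only [Ind] at he
  by_cases hX : e ∈ X <;> by_cases hY : e ∈ Y
  · simp [hX, hY]
  · rw [if_pos hX, if_neg hY] at he; exact absurd he (by decide)
  · rw [if_neg hX, if_pos hY] at he; exact absurd he (by decide)
  · simp [hX, hY]

lemma Ind_foldr (l : List (Finset γ)) :
    Ind (l.foldr symmDiff ∅) = (l.map Ind).sum := by
  induction l with
  | nil => funext e; simp [Ind]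
  | cons X l ih => simp only [List.foldr_cons, List.map_cons, List.sum_cons, Ind_symmDiff, ih]

lemma card_filter_cast [Fintype γ] (X : Finset γ) (P : γ → Prop) [DecidablePred P] :
    (((X.filter P).card : ZMod 2)) = ∑ e ∈ Finset.univ.filter P, Ind X e := by
  have h1 : X.filter P = (Finset.univ.filter P).filter (fun e => e ∈ X) := by
    ext e
    simp only [Finset.mem_filter, Finset.mem_univ, true_and]
    tauto
  simp only [Ind]
  rw [Finset.sum_boole, h1]

lemma even_iff_cast_zero (n : ℕ) : Even n ↔ (n : ZMod 2) = 0 := by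
  rw [ZMod.natCast_eq_zero_iff]
  exact even_iff_two_dvd

lemma sublist_sum {M : Type*} [AddCommMonoid M] {B l : List γ} (d : γ) (h : l.Sublist B) :
    ∃ S : Finset ℕ, S ⊆ Finset.range B.length ∧
      ∀ f : γ → M, (l.map f).sum = S.sum (fun j => f (B.getD j d)) := by
  obtain ⟨is, hl, hp⟩ := List.sublist_eq_map_getElem h
  have hpv : (is.map (Fin.val)).Pairwise (· < ·) := List.Pairwise.map _ (fun a b hab => hab) hp
  have hnd : (is.map (Fin.val)).Nodup := hpv.imp Nat.ne_of_lt
  refine ⟨(is.map (Fin.val)).toFinset, ?_, ?_⟩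
  · intro j hj
    rw [List.mem_toFinset, List.mem_map] at hj
    obtain ⟨i, _, rfl⟩ := hj
    exact Finset.mem_range.mpr i.isLt
  · intro f
    rw [List.sum_toFinset _ hnd, ← List.comp_map, hl, ← List.comp_map]
    congr 1
    apply List.map_congr_left
    intro i _
    simp only [Function.comp_apply]
    rw [List.getD_eq_getElem _ _ i.isLt, Fin.getElem_fin]

lemma countP_getD (B : List γ) (p : γ → Bool) (d : γ) :
    ((Finset.range B.length).filter (fun j => p (B.getD j d))).card = B.countP p := by
  induction B using List.reverseRecOn with
  | nil => simp
  | append_singleton B a ih =>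
      rw [List.countP_append, List.length_append]
      simp only [List.length_singleton, List.countP_singleton]
      rw [Finset.range_add_one, Finset.filter_insert]
      have hlast : (B ++ [a]).getD B.length d = a := by
        rw [List.getD_append_right _ _ _ _ (le_refl _)]
        simp
      have hsame : (Finset.range B.length).filter (fun j => p ((B ++ [a]).getD j d))
          = (Finset.range B.length).filter (fun j => p (B.getD j d)) := by
        apply Finset.filter_congr
        intro j hj
        rw [List.getD_append _ _ _ _ (Finset.mem_range.mp hj)]
      by_cases hpa : p a = true
      · rw [if_pos (by rw [hlast]; exact hpa)]
        rw [Finset.card_insert_of_notMem (fun h => by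
          have := Finset.mem_of_mem_filter _ h
          rw [Finset.mem_range] at this; omega)]
        rw [hsame, ih, hpa]
        simp
      · rw [if_neg (by rw [hlast]; exact hpa), hsame, ih]
        simp [hpa]

lemma countP_le_sum (out : List (Finset ℕ)) (J : Finset ℕ) (p : Finset ℕ → Bool)
    (h : ∀ T ∈ out, p T = true → ∃ j ∈ J, j ∈ T) :
    out.countP p ≤ ∑ j ∈ J, out.countP (fun T => decide (j ∈ T)) := by
  induction out with
  | nil => simp
  | cons T out ih =>
      have ih' := ih (fun T' hT' hp => h T' (List.mem_cons_of_mem _ hT') hp)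
      simp only [List.countP_cons]
      rw [Finset.sum_add_distrib]
      apply add_le_add ih'
      by_cases hpT : p T = true
      · rw [if_pos hpT]
        obtain ⟨j0, hj0J, hj0T⟩ := h T List.mem_cons_self hpT
        have h2 := Finset.single_le_sum (f := fun j => if decide (j ∈ T) = true then (1:ℕ) else 0)
          (fun _ _ => Nat.zero_le _) hj0J
        exact le_trans (by simp [hj0T]) h2
      · rw [if_neg hpT]
        exact Nat.zero_le _

end Ind


section GTd
variable {γ : Type*} [DecidableEq γ] [Fintype γ]

noncomputable def gTd (b : ℕ → Finset γ) (T : Finset ℕ) : Finset γ :=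
  Finset.univ.filter (fun e => (∑ j ∈ T, Ind (b j)) e = 1)

lemma mem_gTd {b : ℕ → Finset γ} {T : Finset ℕ} {e : γ} :
    e ∈ gTd b T ↔ (∑ j ∈ T, Ind (b j)) e = 1 := by
  simp [gTd]

lemma Ind_gTd (b : ℕ → Finset γ) (T : Finset ℕ) :
    Ind (gTd b T) = ∑ j ∈ T, Ind (b j) := by
  funext e
  simp only [Ind]
  by_cases h1 : e ∈ gTd b T
  · rw [if_pos h1]
    exact (mem_gTd.mp h1).symm
  · rw [if_neg h1]
    rcases (by decide : ∀ x : ZMod 2, x = 0 ∨ x = 1) ((∑ j ∈ T, Ind (b j)) e) with h | h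
    · exact h.symm
    · exact absurd (mem_gTd.mpr h) h1

lemma exists_mem_of_mem_gTd {b : ℕ → Finset γ} {T : Finset ℕ} {e : γ} (h : e ∈ gTd b T) :
    ∃ j ∈ T, e ∈ b j := by
  by_contra hab
  push_neg at hab
  have h0 : (∑ j ∈ T, Ind (b j)) e = 0 := by
    rw [Finset.sum_apply]
    exact Finset.sum_eq_zero (fun j hj => by simp [Ind, hab j hj])
  rw [mem_gTd] at h
  rw [h0] at h
  exact absurd h (by decide)

lemma even_filter_gTd {b : ℕ → Finset γ} {T : Finset ℕ} (P : γ → Prop) [DecidablePred P]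
    (hb : ∀ j ∈ T, Even (((b j).filter P).card)) :
    Even (((gTd b T).filter P).card) := by
  rw [even_iff_cast_zero, card_filter_cast]
  have hcg : ∀ e ∈ Finset.univ.filter P, Ind (gTd b T) e = ∑ j ∈ T, Ind (b j) e := by
    intro e _
    rw [Ind_gTd, Finset.sum_apply]
  rw [Finset.sum_congr rfl hcg, Finset.sum_comm]
  apply Finset.sum_eq_zero
  intro j hj
  rw [← card_filter_cast, ← even_iff_cast_zero]
  exact hb j hj

end GTd

end AuxHelpers

theorem bn_deleteEdges_le (G : SimpleGraph V) (A : Finset (Sym2 V)) :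
    (G.deleteEdges (A : Set (Sym2 V))).bn ≤ (A.card + 1) * G.bn := by
  classical
  have h2fun : ∀ x : Sym2 V → ZMod 2, x + x = 0 := by
    intro x; funext a; exact (by decide : ∀ y : ZMod 2, y + y = 0) (x a)
  -- the defining set for bn G is nonempty
  have hne : {k | ∃ B : List (Finset (Sym2 V)), (∀ X ∈ B, IsF2CycleIn G.edgeSet X) ∧
      GeneratesIn G.edgeSet B ∧
      ∀ e : Sym2 V, B.countP (fun X => decide (e ∈ X)) ≤ k}.Nonempty := by
    refine ⟨(Finset.univ.filter (fun C : Finset (Sym2 V) => IsF2CycleIn G.edgeSet C)).toList.length,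
      (Finset.univ.filter (fun C : Finset (Sym2 V) => IsF2CycleIn G.edgeSet C)).toList,
      ?_, ?_, fun e => List.countP_le_length⟩
    · intro X hX
      rw [Finset.mem_toList, Finset.mem_filter] at hX
      exact hX.2
    · intro C hC
      refine ⟨[C], List.singleton_sublist.mpr ?_, by
        rw [List.foldr_cons, List.foldr_nil,
          show (∅ : Finset (Sym2 V)) = ⊥ from rfl, symmDiff_bot]⟩
      rw [Finset.mem_toList, Finset.mem_filter]
      exact ⟨Finset.mem_univ _, hC⟩
  obtain ⟨B, hBcyc, hBgen, hBcong⟩ : G.bn ∈ {k | ∃ B : List (Finset (Sym2 V)),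
      (∀ X ∈ B, IsF2CycleIn G.edgeSet X) ∧ GeneratesIn G.edgeSet B ∧
      ∀ e : Sym2 V, B.countP (fun X => decide (e ∈ X)) ≤ k} := Nat.sInf_mem hne
  set n := B.length with hn
  set b : ℕ → Finset (Sym2 V) := fun j => B.getD j ∅ with hb
  have hbmem : ∀ j, j < n → b j ∈ B := by
    intro j hj
    rw [hb]
    simp only
    rw [List.getD_eq_getElem _ _ hj]
    exact List.getElem_mem _
  set q : ℕ → (↥A → ZMod 2) := fun j => fun a => Ind (b j) ↑a with hq
  obtain ⟨out, Bas, hout, hgen2, hBasR, hind, hspan, hcnt, hfree⟩ := core q n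
  have hcardA : Fintype.card ↥A = A.card := Fintype.card_coe _
  -- every index is used in at most |A| + 1 members of out
  have hwcap : ∀ j, out.countP (fun T => decide (j ∈ T)) ≤ A.card + 1 := by
    intro j
    by_cases hjB : j ∈ Bas
    · by_cases h0 : 1 ≤ out.countP (fun T => decide (j ∈ T))
      · have h1 : 0 < (Bas.filter (fun i => out.countP (fun T => decide (j ∈ T)) ≤
            out.countP (fun T => decide (i ∈ T)))).card :=
          Finset.card_pos.mpr ⟨j, Finset.mem_filter.mpr ⟨hjB, le_refl _⟩⟩
        have h2 := hcnt (out.countP (fun T => decide (j ∈ T))) h0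
        rw [hcardA] at h2
        omega
      · omega
    · have := hfree j hjB
      rw [hcardA] at this
      omega
  apply Nat.sInf_le
  refine ⟨out.map (gTd b), ?_, ?_, ?_⟩
  · -- members are cycles of G - A
    intro X hX
    rw [List.mem_map] at hX
    obtain ⟨T, hT, rfl⟩ := hX
    obtain ⟨hTR, hTsum⟩ := hout T hT
    constructor
    · intro e he
      obtain ⟨j, hjT, hjb⟩ := exists_mem_of_mem_gTd he
      have hjn : j < n := Finset.mem_range.mp (hTR hjT)
      have heE : e ∈ G.edgeSet := (hBcyc _ (hbmem j hjn)).1 e hjb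
      have heA : e ∉ A := by
        intro heA
        have h0 := congrFun hTsum (⟨e, heA⟩ : ↥A)
        rw [Finset.sum_apply] at h0
        simp only [Pi.zero_apply] at h0
        have h0' : ∑ j ∈ T, Ind (b j) e = 0 := h0
        have h1 := mem_gTd.mp he
        rw [Finset.sum_apply] at h1
        rw [h0'] at h1
        exact absurd h1 (by decide)
      rw [SimpleGraph.edgeSet_deleteEdges]
      exact ⟨heE, fun hc => heA (Finset.mem_coe.mp hc)⟩
    · intro v
      exact even_filter_gTd _ (fun j hj =>
        (hBcyc _ (hbmem j (Finset.mem_range.mp (hTR hj)))).2 v)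
  · -- generation
    intro C hC
    have hCE : IsF2CycleIn G.edgeSet C := by
      refine ⟨fun e he => ?_, hC.2⟩
      have h1 := hC.1 e he
      rw [SimpleGraph.edgeSet_deleteEdges] at h1
      exact h1.1
    have hCA : ∀ e ∈ C, e ∉ A := by
      intro e he heA
      have h1 := hC.1 e he
      rw [SimpleGraph.edgeSet_deleteEdges] at h1
      exact h1.2 (Finset.mem_coe.mpr heA)
    obtain ⟨l, hl, hfold⟩ := hBgen C hCE
    obtain ⟨S, hSR, hSsum⟩ := sublist_sum (M := Sym2 V → ZMod 2) ∅ hl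
    have hIndC : Ind C = ∑ j ∈ S, Ind (b j) := by
      rw [hfold, Ind_foldr]
      exact hSsum Ind
    have hq0 : S.sum q = 0 := by
      funext a
      rw [Finset.sum_apply]
      have h1 := congrFun hIndC ↑a
      rw [Finset.sum_apply] at h1
      have hz : Ind C (↑a : Sym2 V) = 0 := by
        simp only [Ind]
        rw [if_neg]
        intro hmem
        exact hCA _ hmem a.2
      have hgoal : ∑ j ∈ S, Ind (b j) (↑a : Sym2 V) = 0 := by rw [← h1, hz]
      have : ∑ j ∈ S, q j a = 0 := hgoal
      rw [this]
      simp
    obtain ⟨l0, hl0, hS⟩ := hgen2 S hSR hq0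
    refine ⟨l0.map (gTd b), List.Sublist.map _ hl0, ?_⟩
    apply Ind_inj
    rw [Ind_foldr, List.map_map]
    have hmc : (l0.map (Ind ∘ gTd b)).sum = (l0.map (fun T => T.sum (fun j => Ind (b j)))).sum := by
      congr 1
      apply List.map_congr_left
      intro T _
      exact Ind_gTd b T
    rw [hmc, ← sum_foldr_symmDiff h2fun (fun j => Ind (b j)) l0, ← hS, hIndC]
  · -- congestion
    intro e
    rw [List.countP_map]
    have hJ : ∀ T ∈ out, ((fun X => decide (e ∈ X)) ∘ gTd b) T = true →
        ∃ j ∈ (Finset.range n).filter (fun j => e ∈ b j), j ∈ T := by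
      intro T hT hpT
      simp only [Function.comp_apply, decide_eq_true_eq] at hpT
      obtain ⟨j, hjT, hjb⟩ := exists_mem_of_mem_gTd hpT
      exact ⟨j, Finset.mem_filter.mpr ⟨(hout T hT).1 hjT, hjb⟩, hjT⟩
    have h1 := countP_le_sum out _ _ hJ
    have h2 : ∑ j ∈ (Finset.range n).filter (fun j => e ∈ b j),
        out.countP (fun T => decide (j ∈ T))
        ≤ ((Finset.range n).filter (fun j => e ∈ b j)).card * (A.card + 1) := by
      have := Finset.sum_le_card_nsmul ((Finset.range n).filter (fun j => e ∈ b j))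
        (fun j => out.countP (fun T => decide (j ∈ T))) (A.card + 1) (fun j _ => hwcap j)
      simpa [smul_eq_mul] using this
    have h3 : ((Finset.range n).filter (fun j => e ∈ b j)).card
        = B.countP (fun X => decide (e ∈ X)) := by
      rw [← countP_getD B (fun X => decide (e ∈ X)) ∅, hn]
      congr 1
      apply Finset.filter_congr
      intro j _
      simp [hb]
    have h4 := hBcong e
    have h5 : ((Finset.range n).filter (fun j => e ∈ b j)).card * (A.card + 1)
        ≤ G.bn * (A.card + 1) := by
      apply Nat.mul_le_mul_right
      omega
    calc List.countP ((fun X => decide (e ∈ X)) ∘ gTd b) out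
        ≤ _ := h1
      _ ≤ _ := h2
      _ ≤ G.bn * (A.card + 1) := h5
      _ = (A.card + 1) * G.bn := Nat.mul_comm _ _
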